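/- Fix real α ∈ (0,1), let K = ⌊n^α⌋, and let l = l(n) be an integer with 2 ≤ l ≤ K-1. Writing l = η·K²/n (so η ≤ n/K), one has (Ke/l)^l · ((n-K)e/(K-l))^{K-l} · (K/n)^K · ((n-K)/n)^{n-K} ≤ exp(l·(-log η + 1 + K/n)). -/

import Mathlib

set_option maxHeartbeats 1000000


/-- For `α ∈ (0,1)`, `K = ⌊n^α⌋`, and an integer `2 ≤ l ≤ K-1` (with `K < n`), writing
`η = l·n/K²`, one has
`(Ke/l)^l · ((n-K)e/(K-l))^{K-l} · (K/n)^K · ((n-K)/n)^{n-K} ≤ exp(l·(-log η + 1 + K/n))`. -/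

theorem entropy_term_upper_bound (α : ℝ) (hα0 : 0 < α) (hα1 : α < 1)
    (n K l : ℕ) (hKdef : K = ⌊(n : ℝ) ^ α⌋₊) (hKn : K < n)
    (hl2 : 2 ≤ l) (hlK : l ≤ K - 1) :
    ((K : ℝ) * Real.exp 1 / l) ^ l *
        (((n : ℝ) - K) * Real.exp 1 / ((K : ℝ) - l)) ^ (K - l) *
        ((K : ℝ) / n) ^ K * (((n : ℝ) - K) / n) ^ (n - K)
      ≤ Real.exp ((l : ℝ) * (-Real.log ((l : ℝ) * n / (K : ℝ) ^ 2) + 1 + (K : ℝ) / n)) := by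
  have hK3 : 3 ≤ K := by omega
  have hlK' : l < K := by omega
  set nr := (n : ℝ) with hnr
  set k := (K : ℝ) with hkk
  set lr := (l : ℝ) with hlr
  have h2l : (2:ℝ) ≤ lr := by rw [hlr]; exact_mod_cast hl2
  have hlk : lr + 1 ≤ k := by rw [hlr, hkk]; exact_mod_cast (show l + 1 ≤ K by omega)
  have hkn : k + 1 ≤ nr := by rw [hkk, hnr]; exact_mod_cast (show K + 1 ≤ n by omega)
  have hl0 : (0:ℝ) < lr := by linarith
  have hk0 : (0:ℝ) < k := by linarith
  have hn0 : (0:ℝ) < nr := by linarith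
  have hkl0 : (0:ℝ) < k - lr := by linarith
  have hnk0 : (0:ℝ) < nr - k := by linarith
  have hcKl : ((K - l : ℕ) : ℝ) = k - lr := by
    push_cast [Nat.cast_sub hlK'.le]; ring
  have hcnK : ((n - K : ℕ) : ℝ) = nr - k := by
    push_cast [Nat.cast_sub hKn.le]; ring
  have e1 : (0:ℝ) < k * Real.exp 1 / lr := by positivity
  have e2 : (0:ℝ) < (nr - k) * Real.exp 1 / (k - lr) := by positivity
  have e3 : (0:ℝ) < k / nr := by positivity
  have e4 : (0:ℝ) < (nr - k) / nr := by positivity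
  have hrw : ((K : ℝ) * Real.exp 1 / l) ^ l *
        ((nr - k) * Real.exp 1 / (k - lr)) ^ (K - l) *
        (k / nr) ^ K * ((nr - k) / nr) ^ (n - K)
      = Real.exp ((l:ℝ) * Real.log (k * Real.exp 1 / lr)
          + ((K - l : ℕ):ℝ) * Real.log ((nr - k) * Real.exp 1 / (k - lr))
          + (K:ℝ) * Real.log (k / nr)
          + ((n - K : ℕ):ℝ) * Real.log ((nr - k) / nr)) := by
    rw [Real.exp_add, Real.exp_add, Real.exp_add,
      Real.exp_nat_mul, Real.exp_nat_mul, Real.exp_nat_mul, Real.exp_nat_mul,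
      Real.exp_log e1, Real.exp_log e2, Real.exp_log e3, Real.exp_log e4]
  rw [hrw, Real.exp_le_exp, hcKl, hcnK]
  have l1 : Real.log (k * Real.exp 1 / lr) = Real.log k + 1 - Real.log lr := by
    rw [Real.log_div (by positivity) hl0.ne', Real.log_mul hk0.ne' (Real.exp_pos 1).ne',
      Real.log_exp]
  have l2 : Real.log ((nr - k) * Real.exp 1 / (k - lr))
      = Real.log (nr - k) + 1 - Real.log (k - lr) := by
    rw [Real.log_div (by positivity) hkl0.ne', Real.log_mul hnk0.ne' (Real.exp_pos 1).ne',
      Real.log_exp]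
  have l3 : Real.log (k / nr) = Real.log k - Real.log nr :=
    Real.log_div hk0.ne' hn0.ne'
  have l4 : Real.log ((nr - k) / nr) = Real.log (nr - k) - Real.log nr :=
    Real.log_div hnk0.ne' hn0.ne'
  have l5 : Real.log (lr * nr / k ^ 2) = Real.log lr + Real.log nr - 2 * Real.log k := by
    rw [Real.log_div (by positivity) (by positivity), Real.log_mul hl0.ne' hn0.ne',
      Real.log_pow]
    push_cast; ring
  rw [l1, l2, l3, l4, l5]
  -- Fact A: log (nr - k) ≤ log nr - k / nr
  have hA : Real.log (nr - k) ≤ Real.log nr - k / nr := by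
    have h := Real.log_le_sub_one_of_pos (show (0:ℝ) < (nr - k)/nr by positivity)
    rw [Real.log_div hnk0.ne' hn0.ne'] at h
    have : (nr - k)/nr - 1 = -(k/nr) := by field_simp; ring
    linarith [this ▸ h]
  have hA' : (nr - lr) * Real.log (nr - k) ≤ (nr - lr) * (Real.log nr - k / nr) :=
    mul_le_mul_of_nonneg_left hA (by linarith)
  -- Fact B
  have hB : k * Real.log k - lr * Real.log k - lr ≤ (k - lr) * Real.log (k - lr) := by
    have h := Real.log_le_sub_one_of_pos (show (0:ℝ) < k/(k - lr) by positivity)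
    rw [Real.log_div hk0.ne' hkl0.ne'] at h
    have h2 : (k - lr) * (Real.log k - Real.log (k - lr)) ≤ (k - lr) * (k/(k-lr) - 1) :=
      mul_le_mul_of_nonneg_left h hkl0.le
    have h3 : (k - lr) * (k/(k-lr) - 1) = lr := by field_simp; ring
    nlinarith [h2, h3]
  have hq : nr * (k / nr) = k := by field_simp
  nlinarith [hA', hB, hq, mul_pos hl0 (div_pos hk0 hn0)]
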